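/- Let F be the multilinear extension of a monotone submodular function f with marginal values in [0,1], λ ∈ [0,1], and x ∈ [0,1]^n with x_i = γ ∈ [0,1], x_j = β ∈ [0,1], β+γ ≤ 1. Define the random vector x' to be x + β·e_i - β·e_j with probability γ/(β+γ), and x - γ·e_i + γ·e_j with probability β/(β+γ). Then E[e^{λ(F(x)-F(x'))}] ≤ e^{λ²βγ(F_j(x)-F_i(x))²}, where F_i, F_j denote the partial derivatives of F at x. -/

import Mathlib

open Finset

lemma exp_quad {u : ℝ} (h : |u| ≤ 1) : Real.exp u ≤ 1 + u + u ^ 2 := by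
  have hb := Real.exp_bound h (n := 2) (by norm_num)
  have h3 : ∑ m ∈ Finset.range 2, u ^ m / (Nat.factorial m) = 1 + u := by
    simp [Finset.sum_range_succ, Nat.factorial]
  rw [h3] at hb
  have h2 : |u| ^ 2 * ((Nat.succ 2) / ((Nat.factorial 2 : ℝ) * 2)) = u ^ 2 * (3/4) := by
    rw [sq_abs]; norm_num [Nat.factorial]
  have : Real.exp u - (1 + u) ≤ u ^ 2 * (3/4) := by
    calc Real.exp u - (1 + u) ≤ |Real.exp u - (1 + u)| := le_abs_self _
      _ ≤ u ^ 2 * (3/4) := by rw [← h2]; exact_mod_cast hb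
  nlinarith [sq_nonneg u]

variable {n : ℕ}

lemma prod_diff1 (S : Finset (Fin n)) :
    Differentiable ℝ (fun y : Fin n → ℝ => ∏ k ∈ S, y k) := by
  classical
  induction S using Finset.induction_on with
  | empty => simpa using differentiable_const (1:ℝ)
  | insert _ _ ha ih =>
    rename_i a s
    have h1 : Differentiable ℝ (fun y : Fin n → ℝ => y a) := differentiable_apply a
    simpa [Finset.prod_insert ha] using h1.fun_mul ih

lemma prod_diff2 (S : Finset (Fin n)) :
    Differentiable ℝ (fun y : Fin n → ℝ => ∏ k ∈ S, (1 - y k)) := by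
  classical
  induction S using Finset.induction_on with
  | empty => simpa using differentiable_const (1:ℝ)
  | insert _ _ ha ih =>
    rename_i a s
    have h1 : Differentiable ℝ (fun y : Fin n → ℝ => 1 - y a) :=
      (differentiable_const 1).sub (differentiable_apply a)
    simpa [Finset.prod_insert ha] using h1.fun_mul ih

lemma F_diff (f : Finset (Fin n) → ℝ) :
    Differentiable ℝ (fun y : Fin n → ℝ => ∑ S : Finset (Fin n),
      f S * ((∏ i ∈ S, y i) * ∏ i ∈ Sᶜ, (1 - y i))) := by
  apply Differentiable.fun_sum
  intro S _
  exact ((prod_diff1 S).mul (prod_diff2 Sᶜ)).const_mul (f S)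

lemma F_affine (f : Finset (Fin n) → ℝ) (F : (Fin n → ℝ) → ℝ)
    (hF : ∀ x, F x = ∑ S : Finset (Fin n),
      f S * ((∏ i ∈ S, x i) * ∏ i ∈ Sᶜ, (1 - x i)))
    (i : Fin n) (y : Fin n → ℝ) (s : ℝ) :
    F (Function.update y i s)
      = (1 - s) * F (Function.update y i 0) + s * F (Function.update y i 1) := by
  classical
  rw [hF, hF, hF, Finset.mul_sum, Finset.mul_sum, ← Finset.sum_add_distrib]
  apply Finset.sum_congr rfl
  intro S _
  have hP : ∀ (t : ℝ) (T : Finset (Fin n)), i ∉ T →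
      ∏ k ∈ T, Function.update y i t k = ∏ k ∈ T, y k := by
    intro t T hT
    exact Finset.prod_congr rfl (fun k hk => Function.update_of_ne (by rintro rfl; exact hT hk) _ _)
  have hP' : ∀ (t : ℝ) (T : Finset (Fin n)), i ∉ T →
      ∏ k ∈ T, (1 - Function.update y i t k) = ∏ k ∈ T, (1 - y k) := by
    intro t T hT
    exact Finset.prod_congr rfl (fun k hk => by
      rw [Function.update_of_ne (by rintro rfl; exact hT hk)])
  by_cases hiS : i ∈ S
  · have hic : i ∉ Sᶜ := by simp [hiS]
    have h1 : ∀ t : ℝ, ∏ k ∈ S, Function.update y i t k = t * ∏ k ∈ S.erase i, y k := by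
      intro t
      rw [← Finset.mul_prod_erase S _ hiS, Function.update_self]
      congr 1
      exact hP t _ (Finset.notMem_erase i S)
    rw [hP' s _ hic, hP' 0 _ hic, hP' 1 _ hic, h1 s, h1 0, h1 1]
    ring
  · have hic : i ∈ Sᶜ := by simp [hiS]
    have h1 : ∀ t : ℝ, ∏ k ∈ Sᶜ, (1 - Function.update y i t k)
        = (1 - t) * ∏ k ∈ Sᶜ.erase i, (1 - y k) := by
      intro t
      rw [← Finset.mul_prod_erase Sᶜ _ hic, Function.update_self]
      congr 1
      exact hP' t _ (Finset.notMem_erase i Sᶜ)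
    rw [hP s _ hiS, hP 0 _ hiS, hP 1 _ hiS, h1 s, h1 0, h1 1]
    ring

variable {n : ℕ}

lemma my_fderiv_eq (f : Finset (Fin n) → ℝ) (F : (Fin n → ℝ) → ℝ)
    (hF : ∀ x, F x = ∑ S : Finset (Fin n),
      f S * ((∏ i ∈ S, x i) * ∏ i ∈ Sᶜ, (1 - x i)))
    (hdiff : Differentiable ℝ F)
    (haff : ∀ (i : Fin n) (y : Fin n → ℝ) (s : ℝ),
      F (Function.update y i s)
        = (1 - s) * F (Function.update y i 0) + s * F (Function.update y i 1))
    (i : Fin n) (x : Fin n → ℝ) :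
    fderiv ℝ F x (Pi.single i 1)
      = F (Function.update x i 1) - F (Function.update x i 0) := by
  classical
  set v : Fin n → ℝ := Pi.single i 1 with hv
  have hc : HasDerivAt (fun t : ℝ => x + t • v) v 0 := by
    simpa using ((hasDerivAt_id (0:ℝ)).smul_const v).const_add x
  have hc0 : x + (0:ℝ) • v = x := by simp
  have h1 : HasDerivAt (fun t : ℝ => F (x + t • v)) (fderiv ℝ F x v) 0 := by
    have hFd : HasFDerivAt F (fderiv ℝ F x) ((fun t : ℝ => x + t • v) 0) := by
      simpa [hc0] using (hdiff x).hasFDerivAt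
    exact hFd.comp_hasDerivAt 0 hc
  have hupd : ∀ t : ℝ, x + t • v = Function.update x i (x i + t) := by
    intro t
    funext k
    by_cases hk : k = i
    · subst hk; simp [hv]
    · simp [hv, Function.update_of_ne hk, Pi.single_eq_of_ne hk]
  have h2 : HasDerivAt (fun t : ℝ => F (x + t • v))
      (F (Function.update x i 1) - F (Function.update x i 0)) 0 := by
    have heq : (fun t : ℝ => F (x + t • v))
        = fun t : ℝ => (1 - (x i + t)) * F (Function.update x i 0)
            + (x i + t) * F (Function.update x i 1) := by
      funext t
      rw [hupd t, haff i x (x i + t)]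
    rw [heq]
    have ht : HasDerivAt (fun t : ℝ => x i + t) 1 0 := (hasDerivAt_id 0).const_add (x i)
    have := ((ht.const_sub 1).mul_const (F (Function.update x i 0))).fun_add
      (ht.mul_const (F (Function.update x i 1)))
    refine this.congr_deriv ?_
    ring
  exact h1.unique h2

variable {n : ℕ}

lemma F_expand (f : Finset (Fin n) → ℝ) (F : (Fin n → ℝ) → ℝ)
    (hF : ∀ x, F x = ∑ S : Finset (Fin n),
      f S * ((∏ i ∈ S, x i) * ∏ i ∈ Sᶜ, (1 - x i)))
    (i j : Fin n) (hij : i ≠ j) (x : Fin n → ℝ) (a b : Bool) :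
    F (Function.update (Function.update x i (if a then (1:ℝ) else 0)) j
        (if b then (1:ℝ) else 0))
      = ∑ T ∈ ((Finset.univ.erase j).erase i).powerset,
          f (if a then insert i (if b then insert j T else T)
              else (if b then insert j T else T)) *
            ((∏ k ∈ T, x k) * ∏ k ∈ (insert i (insert j T))ᶜ, (1 - x k)) := by
  classical
  set z := Function.update (Function.update x i (if a then (1:ℝ) else 0)) j
      (if b then (1:ℝ) else 0) with hz
  have hzi : z i = if a then 1 else 0 := by
    rw [hz, Function.update_of_ne hij, Function.update_self]
  have hzj : z j = if b then 1 else 0 := Function.update_self _ _ _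
  have hzk : ∀ k, k ≠ i → k ≠ j → z k = x k := by
    intro k hki hkj
    rw [hz, Function.update_of_ne hkj, Function.update_of_ne hki]
  rw [hF]
  have h0 : ∑ S ∈ Finset.univ.filter
        (fun S : Finset (Fin n) => (i ∈ S ↔ a = true) ∧ (j ∈ S ↔ b = true)),
        f S * ((∏ k ∈ S, z k) * ∏ k ∈ Sᶜ, (1 - z k))
      = ∑ S : Finset (Fin n), f S * ((∏ k ∈ S, z k) * ∏ k ∈ Sᶜ, (1 - z k)) := by
    apply Finset.sum_filter_of_ne
    intro S _ hne
    constructor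
    · constructor
      · intro hiS
        by_contra ha
        have ha' : a = false := by simpa using ha
        have : ∏ k ∈ S, z k = 0 :=
          Finset.prod_eq_zero hiS (by rw [hzi, ha']; simp)
        exact hne (by rw [this]; ring)
      · intro ha
        by_contra hiS
        have : ∏ k ∈ Sᶜ, (1 - z k) = 0 :=
          Finset.prod_eq_zero (Finset.mem_compl.2 hiS) (by rw [hzi, ha]; simp)
        exact hne (by rw [this]; ring)
    · constructor
      · intro hjS
        by_contra hb
        have hb' : b = false := by simpa using hb
        have : ∏ k ∈ S, z k = 0 :=
          Finset.prod_eq_zero hjS (by rw [hzj, hb']; simp)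
        exact hne (by rw [this]; ring)
      · intro hb
        by_contra hjS
        have : ∏ k ∈ Sᶜ, (1 - z k) = 0 :=
          Finset.prod_eq_zero (Finset.mem_compl.2 hjS) (by rw [hzj, hb]; simp)
        exact hne (by rw [this]; ring)
  rw [← h0]
  have hback : ∀ S : Finset (Fin n), (i ∈ S ↔ a = true) → (j ∈ S ↔ b = true) →
      (if a then insert i (if b then insert j ((S.erase i).erase j) else (S.erase i).erase j)
        else (if b then insert j ((S.erase i).erase j) else (S.erase i).erase j)) = S := by
    intro S hiS hjS
    ext k
    by_cases hki : k = i
    · subst hki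
      cases a <;> cases b <;>
        simp_all [Finset.mem_insert, Finset.mem_erase, hij] <;> tauto
    · by_cases hkj : k = j
      · subst hkj
        cases a <;> cases b <;>
          simp_all [Finset.mem_insert, Finset.mem_erase, Ne.symm hij] <;> tauto
      · cases a <;> cases b <;>
          simp [Finset.mem_insert, Finset.mem_erase, hki, hkj]
  refine Finset.sum_bij' (fun S _ => (S.erase i).erase j)
    (fun T _ => if a then insert i (if b then insert j T else T)
      else (if b then insert j T else T)) ?_ ?_ ?_ ?_ ?_
  · intro S hS
    simp only [Finset.mem_powerset]
    intro k hk
    simp only [Finset.mem_erase] at hk ⊢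
    exact ⟨hk.2.1, hk.1, Finset.mem_univ k⟩
  · intro T hT
    simp only [Finset.mem_powerset] at hT
    have hiT : i ∉ T := fun h => by have := hT h; simp [Finset.mem_erase] at this
    have hjT : j ∉ T := fun h => by have := hT h; simp [Finset.mem_erase] at this
    simp only [Finset.mem_filter]
    refine ⟨Finset.mem_univ _, ?_, ?_⟩
    · cases a <;> cases b <;> simp [hiT, hjT, hij, Ne.symm hij]
    · cases a <;> cases b <;> simp [hiT, hjT, hij, Ne.symm hij]
  · intro S hS
    simp only [Finset.mem_filter] at hS
    exact hback S hS.2.1 hS.2.2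
  · intro T hT
    simp only [Finset.mem_powerset] at hT
    have hiT : i ∉ T := fun h => by have := hT h; simp [Finset.mem_erase] at this
    have hjT : j ∉ T := fun h => by have := hT h; simp [Finset.mem_erase] at this
    ext k
    by_cases hki : k = i
    · subst hki
      cases a <;> cases b <;> simp [Finset.mem_erase, hiT]
    · by_cases hkj : k = j
      · subst hkj
        cases a <;> cases b <;> simp [Finset.mem_erase, hjT, Ne.symm hij, hij]
      · cases a <;> cases b <;> simp [Finset.mem_erase, hki, hkj]
  · intro S hS
    simp only [Finset.mem_filter] at hS
    obtain ⟨-, hiS, hjS⟩ := hS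
    set T := (S.erase i).erase j with hTdef
    have hmemT : ∀ k, k ∈ T ↔ (k ≠ i ∧ k ≠ j ∧ k ∈ S) := by
      intro k; simp [hTdef, Finset.mem_erase]; tauto
    have hTS : T ⊆ S := fun k hk => ((hmemT k).1 hk).2.2
    have hSsub : S ⊆ insert i (insert j T) := by
      intro k hk
      by_cases hki : k = i
      · simp [hki]
      · by_cases hkj : k = j
        · simp [hkj]
        · simp [Finset.mem_insert, (hmemT k).2 ⟨hki, hkj, hk⟩]
    have e1 : ∏ k ∈ S, z k = ∏ k ∈ T, x k := by
      rw [← Finset.prod_subset hTS ?_]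
      · exact Finset.prod_congr rfl (fun k hk =>
          hzk k ((hmemT k).1 hk).1 ((hmemT k).1 hk).2.1)
      · intro k hkS hkT
        have hk2 : k = i ∨ k = j := by
          by_contra hc
          push_neg at hc
          exact hkT ((hmemT k).2 ⟨hc.1, hc.2, hkS⟩)
        rcases hk2 with rfl | rfl
        · rw [hzi, hiS.1 hkS]; simp
        · rw [hzj, hjS.1 hkS]; simp
    have e2 : ∏ k ∈ Sᶜ, (1 - z k) = ∏ k ∈ (insert i (insert j T))ᶜ, (1 - x k) := by
      have hCsub : (insert i (insert j T))ᶜ ⊆ Sᶜ := by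
        intro k hk
        simp only [Finset.mem_compl] at hk ⊢
        exact fun h => hk (hSsub h)
      rw [← Finset.prod_subset hCsub ?_]
      · apply Finset.prod_congr rfl
        intro k hk
        simp only [Finset.mem_compl, Finset.mem_insert] at hk
        push_neg at hk
        rw [hzk k hk.1 hk.2.1]
      · intro k hkSc hkC
        simp only [Finset.mem_compl] at hkSc hkC
        push_neg at hkC
        simp only [Finset.mem_insert] at hkC
        rcases hkC with rfl | h
        · have : ¬ (a = true) := fun h => hkSc (hiS.2 h)
          rw [hzi, if_neg this]; ring
        · rcases h with rfl | h
          · have : ¬ (b = true) := fun h => hkSc (hjS.2 h)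
            rw [hzj, if_neg this]; ring
          · exact absurd (hTS h) hkSc
    rw [e1, e2, hback S hiS hjS]

set_option maxHeartbeats 1000000 in
theorem stmt_18 {n : ℕ} (f : Finset (Fin n) → ℝ)
    (hmono : ∀ S T, S ⊆ T → f S ≤ f T)
    (hsub : ∀ A B, f (A ∪ B) + f (A ∩ B) ≤ f A + f B)
    (hmarg : ∀ (S : Finset (Fin n)) (k : Fin n),
      f (insert k S) - f S ∈ Set.Icc (0:ℝ) 1)
    (F : (Fin n → ℝ) → ℝ)
    (hF : ∀ x, F x = ∑ S : Finset (Fin n),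
      f S * ((∏ i ∈ S, x i) * ∏ i ∈ Sᶜ, (1 - x i)))
    (lam : ℝ) (hlam : lam ∈ Set.Icc (0:ℝ) 1)
    (i j : Fin n) (hij : i ≠ j)
    (x : Fin n → ℝ) (hx : ∀ k, x k ∈ Set.Icc (0:ℝ) 1)
    (β γ : ℝ) (hγ : x i = γ) (hβ : x j = β) (hβγ : β + γ ≤ 1)
    (hβ0 : 0 ≤ β) (hγ0 : 0 ≤ γ) :
    γ / (β + γ) *
        Real.exp (lam * (F x - F (Function.update (Function.update x i (γ + β)) j 0)))
      + β / (β + γ) *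
        Real.exp (lam * (F x - F (Function.update (Function.update x i 0) j (β + γ))))
      ≤ Real.exp (lam ^ 2 * β * γ *
          (fderiv ℝ F x (Pi.single j 1) - fderiv ℝ F x (Pi.single i 1)) ^ 2) := by
  classical
  obtain ⟨hl0, hl1⟩ := hlam
  have hβ1 : β ≤ 1 := by linarith
  have hγ1 : γ ≤ 1 := by linarith
  rcases eq_or_lt_of_le (by positivity : (0:ℝ) ≤ β + γ) with hs | hs
  · -- degenerate case β = γ = 0
    have hb0 : β = 0 := by linarith
    have hg0 : γ = 0 := by linarith
    rw [hb0, hg0]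
    norm_num
  -- main case
  -- differentiability and affine structure
  have hdiff : Differentiable ℝ F := by
    rw [show F = _ from funext hF]; exact F_diff f
  have haff := F_affine f F hF
  -- corner expansions
  set P := ((Finset.univ.erase j : Finset (Fin n)).erase i).powerset with hPdef
  set w : Finset (Fin n) → ℝ :=
    fun T => (∏ k ∈ T, x k) * ∏ k ∈ (insert i (insert j T))ᶜ, (1 - x k) with hwdef
  have hTmem : ∀ T ∈ P, i ∉ T ∧ j ∉ T := by
    intro T hT
    rw [hPdef, Finset.mem_powerset] at hT
    constructor <;> intro h <;> have := hT h <;> simp [Finset.mem_erase] at this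
  have hw0 : ∀ T ∈ P, 0 ≤ w T := by
    intro T _
    exact mul_nonneg (Finset.prod_nonneg fun k _ => (hx k).1)
      (Finset.prod_nonneg fun k _ => by linarith [(hx k).2])
  have hw1 : ∑ T ∈ P, w T = 1 := by
    have h := Finset.prod_add (f := x) (g := fun k => (1:ℝ) - x k)
      ((Finset.univ.erase j : Finset (Fin n)).erase i)
    have hleft : ∏ k ∈ ((Finset.univ.erase j : Finset (Fin n)).erase i),
        (x k + (1 - x k)) = 1 := Finset.prod_eq_one (fun k _ => by ring)
    rw [hleft] at h
    rw [hPdef]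
    rw [h]
    apply Finset.sum_congr rfl
    intro T hT
    have hset : ((Finset.univ.erase j : Finset (Fin n)).erase i) \ T
        = (insert i (insert j T))ᶜ := by
      ext k
      simp only [Finset.mem_sdiff, Finset.mem_erase, Finset.mem_univ, Finset.mem_compl,
        Finset.mem_insert, true_and]
      tauto
    simp only [hwdef]
    rw [hset]
  have hQ11 : F (Function.update (Function.update x i (1:ℝ)) j 1)
      = ∑ T ∈ P, f (insert i (insert j T)) * w T := by
    simpa [hPdef, hwdef] using F_expand f F hF i j hij x true true
  have hQ10 : F (Function.update (Function.update x i (1:ℝ)) j 0)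
      = ∑ T ∈ P, f (insert i T) * w T := by
    simpa [hPdef, hwdef] using F_expand f F hF i j hij x true false
  have hQ01 : F (Function.update (Function.update x i (0:ℝ)) j 1)
      = ∑ T ∈ P, f (insert j T) * w T := by
    simpa [hPdef, hwdef] using F_expand f F hF i j hij x false true
  have hQ00 : F (Function.update (Function.update x i (0:ℝ)) j 0)
      = ∑ T ∈ P, f T * w T := by
    simpa [hPdef, hwdef] using F_expand f F hF i j hij x false false
  -- generic bound for weighted sums
  have key : ∀ g : Finset (Fin n) → ℝ, (∀ T ∈ P, g T ∈ Set.Icc (0:ℝ) 1) →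
      (∑ T ∈ P, g T * w T) ∈ Set.Icc (0:ℝ) 1 := by
    intro g hg
    constructor
    · exact Finset.sum_nonneg fun T hT => mul_nonneg (hg T hT).1 (hw0 T hT)
    · rw [← hw1]
      exact Finset.sum_le_sum fun T hT =>
        mul_le_of_le_one_left (hw0 T hT) (hg T hT).2
  -- name the corners
  set Q11 := F (Function.update (Function.update x i (1:ℝ)) j 1) with hQ11d
  set Q10 := F (Function.update (Function.update x i (1:ℝ)) j 0) with hQ10d
  set Q01 := F (Function.update (Function.update x i (0:ℝ)) j 1) with hQ01d
  set Q00 := F (Function.update (Function.update x i (0:ℝ)) j 0) with hQ00d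
  clear_value Q11 Q10 Q01 Q00
  -- the four marginal differences
  have hu : Q10 - Q00 ∈ Set.Icc (0:ℝ) 1 := by
    rw [hQ10, hQ00, ← Finset.sum_sub_distrib]
    simp_rw [← sub_mul]
    exact key _ (fun T hT => hmarg T i)
  have hu2 : Q11 - Q01 ∈ Set.Icc (0:ℝ) 1 := by
    rw [hQ11, hQ01, ← Finset.sum_sub_distrib]
    simp_rw [← sub_mul]
    exact key _ (fun T hT => hmarg (insert j T) i)
  have hv : Q01 - Q00 ∈ Set.Icc (0:ℝ) 1 := by
    rw [hQ01, hQ00, ← Finset.sum_sub_distrib]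
    simp_rw [← sub_mul]
    exact key _ (fun T hT => hmarg T j)
  have hv2 : Q11 - Q10 ∈ Set.Icc (0:ℝ) 1 := by
    rw [hQ11, hQ10, ← Finset.sum_sub_distrib]
    simp_rw [← sub_mul]
    refine key _ (fun T hT => ?_)
    rw [Finset.insert_comm]
    exact hmarg (insert i T) j
  -- submodularity: cross term nonpositive
  have hc3 : Q11 - Q10 - Q01 + Q00 ≤ 0 := by
    rw [hQ11, hQ10, hQ01, hQ00, ← Finset.sum_sub_distrib, ← Finset.sum_sub_distrib,
      ← Finset.sum_add_distrib]
    apply Finset.sum_nonpos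
    intro T hT
    obtain ⟨hiT, hjT⟩ := hTmem T hT
    have hun : insert i T ∪ insert j T = insert i (insert j T) := by
      ext k
      simp only [Finset.mem_union, Finset.mem_insert]
      tauto
    have hin : insert i T ∩ insert j T = T := by
      ext k
      simp only [Finset.mem_inter, Finset.mem_insert]
      constructor
      · rintro ⟨h1 | h1, h2 | h2⟩ <;> try assumption
        exact absurd (h1 ▸ h2) hij
      · exact fun h => ⟨Or.inr h, Or.inr h⟩
    have hsb := hsub (insert i T) (insert j T)
    rw [hun, hin] at hsb
    have hwT := hw0 T hT
    nlinarith [hwT, hsb]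
  -- bilinear expansion of F in coordinates i and j
  have hcomm : ∀ (a b : ℝ), Function.update (Function.update x i a) j b
      = Function.update (Function.update x j b) i a := fun a b =>
    Function.update_comm hij a b x
  have hbil : ∀ a b : ℝ, F (Function.update (Function.update x i a) j b)
      = Q00 + a * (Q10 - Q00) + b * (Q01 - Q00)
        + a * b * (Q11 - Q10 - Q01 + Q00) := by
    intro a b
    rw [haff j (Function.update x i a) b, hcomm a 0, hcomm a 1,
      haff i (Function.update x j 0) a, haff i (Function.update x j 1) a,
      ← hcomm 0 0, ← hcomm 1 0, ← hcomm 0 1, ← hcomm 1 1,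
      ← hQ00d, ← hQ10d, ← hQ01d, ← hQ11d]
    ring
  -- express F x
  have hFx : F x = F (Function.update (Function.update x i γ) j β) := by
    congr 1
    funext k
    by_cases h1 : k = j
    · subst h1
      rw [Function.update_self, hβ]
    · rw [Function.update_of_ne h1]
      by_cases h2 : k = i
      · subst h2
        rw [Function.update_self, hγ]
      · rw [Function.update_of_ne h2]
  -- the partial derivatives
  have hdi : fderiv ℝ F x (Pi.single i 1)
      = (Q10 - Q00) + β * (Q11 - Q10 - Q01 + Q00) := by
    rw [my_fderiv_eq f F hF hdiff haff i x]
    have h1 : Function.update x i (1:ℝ)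
        = Function.update (Function.update x i 1) j β := by
      have hb : β = (Function.update x i (1:ℝ)) j := by
        rw [Function.update_of_ne (Ne.symm hij)]; exact hβ.symm
      rw [hb, Function.update_eq_self]
    have h0 : Function.update x i (0:ℝ)
        = Function.update (Function.update x i 0) j β := by
      have hb : β = (Function.update x i (0:ℝ)) j := by
        rw [Function.update_of_ne (Ne.symm hij)]; exact hβ.symm
      rw [hb, Function.update_eq_self]
    rw [h1, h0, hbil 1 β, hbil 0 β]
    ring
  have hdj : fderiv ℝ F x (Pi.single j 1)
      = (Q01 - Q00) + γ * (Q11 - Q10 - Q01 + Q00) := by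
    rw [my_fderiv_eq f F hF hdiff haff j x]
    have hxi : Function.update x i γ = x := by rw [← hγ]; exact Function.update_eq_self i x
    have h1 : Function.update x j (1:ℝ)
        = Function.update (Function.update x i γ) j 1 := by rw [hxi]
    have h0 : Function.update x j (0:ℝ)
        = Function.update (Function.update x i γ) j 0 := by rw [hxi]
    rw [h1, h0, hbil γ 1, hbil γ 0]
    ring
  set di := fderiv ℝ F x (Pi.single i 1) with hdid
  set dj := fderiv ℝ F x (Pi.single j 1) with hdjd
  set c3 := Q11 - Q10 - Q01 + Q00 with hc3d
  clear_value di dj c3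
  -- bounds on the derivatives
  have hdi01 : di ∈ Set.Icc (0:ℝ) 1 := by
    have h : di = (1 - β) * (Q10 - Q00) + β * (Q11 - Q01) := by rw [hdi, hc3d]; ring
    constructor
    · rw [h]; nlinarith [hu.1, hu2.1, hβ0, hβ1]
    · rw [h]; nlinarith [hu.2, hu2.2, hβ0, hβ1]
  have hdj01 : dj ∈ Set.Icc (0:ℝ) 1 := by
    have h : dj = (1 - γ) * (Q01 - Q00) + γ * (Q11 - Q10) := by rw [hdj, hc3d]; ring
    constructor
    · rw [h]; nlinarith [hv.1, hv2.1, hγ0, hγ1]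
    · rw [h]; nlinarith [hv.2, hv2.2, hγ0, hγ1]
  set D := dj - di with hDd
  clear_value D
  have hDabs : |D| ≤ 1 := by
    rw [abs_le]
    constructor
    · rw [hDd]; linarith [hdj01.1, hdi01.2]
    · rw [hDd]; linarith [hdj01.2, hdi01.1]
  -- exponent bounds
  have he1 : lam * (F x - F (Function.update (Function.update x i (γ + β)) j 0))
      ≤ lam * (β * D) := by
    apply mul_le_mul_of_nonneg_left _ hl0
    have heq : F x - F (Function.update (Function.update x i (γ + β)) j 0)
        = β * D + β ^ 2 * c3 := by
      rw [hFx, hbil γ β, hbil (γ + β) 0, hDd, hdi, hdj, hc3d]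
      ring
    rw [heq]
    nlinarith [hc3, hβ0]
  have he2 : lam * (F x - F (Function.update (Function.update x i 0) j (β + γ)))
      ≤ -(lam * (γ * D)) := by
    have heq : F x - F (Function.update (Function.update x i 0) j (β + γ))
        = -(γ * D) + γ ^ 2 * c3 := by
      rw [hFx, hbil γ β, hbil 0 (β + γ), hDd, hdi, hdj, hc3d]
      ring
    calc lam * (F x - F (Function.update (Function.update x i 0) j (β + γ)))
        ≤ lam * (-(γ * D)) := by
          apply mul_le_mul_of_nonneg_left _ hl0
          rw [heq]
          nlinarith [hc3, hγ0]
      _ = -(lam * (γ * D)) := by ring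
  -- absolute value bounds for the quadratic exp bound
  have habs1 : |lam * (β * D)| ≤ 1 := by
    rw [abs_mul, abs_mul, abs_of_nonneg hl0, abs_of_nonneg hβ0]
    have h1 : β * |D| ≤ 1 := mul_le_one₀ hβ1 (abs_nonneg D) hDabs
    exact mul_le_one₀ hl1 (by positivity) h1
  have habs2 : |(-(lam * (γ * D)))| ≤ 1 := by
    rw [abs_neg, abs_mul, abs_mul, abs_of_nonneg hl0, abs_of_nonneg hγ0]
    have h1 : γ * |D| ≤ 1 := mul_le_one₀ hγ1 (abs_nonneg D) hDabs
    exact mul_le_one₀ hl1 (by positivity) h1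
  have hp0 : (0:ℝ) ≤ γ / (β + γ) := by positivity
  have hq0 : (0:ℝ) ≤ β / (β + γ) := by positivity
  calc γ / (β + γ) *
        Real.exp (lam * (F x - F (Function.update (Function.update x i (γ + β)) j 0)))
      + β / (β + γ) *
        Real.exp (lam * (F x - F (Function.update (Function.update x i 0) j (β + γ))))
      ≤ γ / (β + γ) * Real.exp (lam * (β * D))
        + β / (β + γ) * Real.exp (-(lam * (γ * D))) := by
        apply add_le_add
        · exact mul_le_mul_of_nonneg_left (Real.exp_le_exp.2 he1) hp0
        · exact mul_le_mul_of_nonneg_left (Real.exp_le_exp.2 he2) hq0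
    _ ≤ γ / (β + γ) * (1 + lam * (β * D) + (lam * (β * D)) ^ 2)
        + β / (β + γ) * (1 + (-(lam * (γ * D))) + (-(lam * (γ * D))) ^ 2) := by
        apply add_le_add
        · exact mul_le_mul_of_nonneg_left (exp_quad habs1) hp0
        · exact mul_le_mul_of_nonneg_left (exp_quad habs2) hq0
    _ = 1 + lam ^ 2 * β * γ * D ^ 2 := by
        field_simp
        ring
    _ ≤ Real.exp (lam ^ 2 * β * γ * D ^ 2) := by
        linarith [Real.add_one_le_exp (lam ^ 2 * β * γ * D ^ 2)]
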